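/- Let f be a BN on a finite variable set V such that for every state x the local influence graph IG(f,x) has no even cycle. Then ASTG(f) has exactly one attractor. -/

import Mathlib

/-- A trap set of a directed graph (given by its arc relation `E`):
a nonempty set of vertices with no outgoing arc. -/
def TrapSet {V : Type*} (E : V → V → Prop) (A : Set V) : Prop :=
  A.Nonempty ∧ ∀ x ∈ A, ∀ y, E x y → y ∈ A

/-- An attractor: an inclusion-minimal trap set. -/
def Attractor {V : Type*} (E : V → V → Prop) (A : Set V) : Prop :=
  TrapSet E A ∧ ∀ B ⊆ A, TrapSet E B → B = A

/-- Arc relation of the asynchronous state transition graph of a Boolean network `f`. -/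
def astg {V : Type*} (f : V → (V → Bool) → Bool) (x y : V → Bool) : Prop :=
  ∃ v, y v = f v x ∧ y v ≠ x v ∧ ∀ u, u ≠ v → y u = x u

/-- `f` is an AND-NOT Boolean network: every update function is constant or a
conjunction of literals over pairwise distinct variables. -/
def IsAndNot {V : Type*} [DecidableEq V] (f : V → (V → Bool) → Bool) : Prop :=
  ∀ v, (∃ b, ∀ x, f v x = b) ∨
    ∃ (L : Finset V) (sgn : V → Bool), ∀ x, f v x = decide (∀ u ∈ L, x u = sgn u)

/-- Positive arc `u → v` of the local influence graph of `f` at state `x`. -/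
def localPos {V : Type*} [DecidableEq V] (f : V → (V → Bool) → Bool)
    (x : V → Bool) (u v : V) : Prop :=
  f v (Function.update x u false) = false ∧ f v (Function.update x u true) = true

/-- Negative arc `u → v` of the local influence graph of `f` at state `x`. -/
def localNeg {V : Type*} [DecidableEq V] (f : V → (V → Bool) → Bool)
    (x : V → Bool) (u v : V) : Prop :=
  f v (Function.update x u false) = true ∧ f v (Function.update x u true) = false

/-- Positive arc of the global influence graph of `f`. -/
def igPos {V : Type*} [DecidableEq V] (f : V → (V → Bool) → Bool) (u v : V) : Prop :=
  ∃ x, localPos f x u v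

/-- Negative arc of the global influence graph of `f`. -/
def igNeg {V : Type*} [DecidableEq V] (f : V → (V → Bool) → Bool) (u v : V) : Prop :=
  ∃ x, localNeg f x u v

/-- The data of a cycle in a signed directed graph: `n ≥ 1` pairwise distinct vertices
`vtx 0, …, vtx (n-1)` together with a sign `sgn i` for the arc `vtx i → vtx ((i+1) % n)`
(`true` = positive, `false` = negative). -/
structure CycleData (V : Type*) where
  n : ℕ
  npos : 0 < n
  vtx : ℕ → V
  sgn : ℕ → Bool
  inj : ∀ i, i < n → ∀ j, j < n → vtx i = vtx j → i = j

/-- `C` is a cycle of the signed directed graph with positive arcs `P` and negative arcs `N`. -/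
def IsCycleIn {V : Type*} (C : CycleData V) (P N : V → V → Prop) : Prop :=
  ∀ i, i < C.n →
    if C.sgn i then P (C.vtx i) (C.vtx ((i + 1) % C.n))
    else N (C.vtx i) (C.vtx ((i + 1) % C.n))

/-- `v` is a vertex of the cycle `C`. -/
def InCycle {V : Type*} (C : CycleData V) (v : V) : Prop :=
  ∃ i, i < C.n ∧ C.vtx i = v

/-- The positive arc `u → v` is an arc of the cycle `C`. -/
def PosArcOf {V : Type*} (C : CycleData V) (u v : V) : Prop :=
  ∃ i, i < C.n ∧ C.vtx i = u ∧ C.vtx ((i + 1) % C.n) = v ∧ C.sgn i = true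

/-- The negative arc `u → v` is an arc of the cycle `C`. -/
def NegArcOf {V : Type*} (C : CycleData V) (u v : V) : Prop :=
  ∃ i, i < C.n ∧ C.vtx i = u ∧ C.vtx ((i + 1) % C.n) = v ∧ C.sgn i = false

/-- The cycle is even: it has an even number of negative arcs. -/
def IsEven {V : Type*} (C : CycleData V) : Prop :=
  Even (((Finset.range C.n).filter (fun i => C.sgn i = false)).card)

/-- `(u, v1, v2)` is a delocalizing triple of the cycle `C` in the signed graph `(P, N)`. -/
def DelocTriple {V : Type*} (C : CycleData V) (P N : V → V → Prop) (u v1 v2 : V) : Prop :=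
  InCycle C v1 ∧ InCycle C v2 ∧ v1 ≠ v2 ∧ P u v1 ∧ N u v2 ∧
    ¬ PosArcOf C u v1 ∧ ¬ NegArcOf C u v2

/-- The cycle `C` is strong in `(P, N)`: it admits no delocalizing triple. -/
def IsStrong {V : Type*} (C : CycleData V) (P N : V → V → Prop) : Prop :=
  ∀ u v1 v2, ¬ DelocTriple C P N u v1 v2

/-- All-positive path from `k` through the intermediate vertices `is` to the endpoint. -/
def PosPath {V : Type*} (P : V → V → Prop) : V → List V → V → Prop
  | k, [], t => P k t
  | k, j :: js, t => P k j ∧ PosPath P j js t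

/-- Path from `k` through intermediate vertices `js` to the endpoint whose arcs are all
positive except the last one, which is negative. -/
def PosNegPath {V : Type*} (P N : V → V → Prop) : V → List V → V → Prop
  | k, [], u => N k u
  | k, j :: js, u => P k j ∧ PosNegPath P N j js u

/-- `k` witnesses the inconsistency of the cycle `C` in the signed graph `(P, N)`. -/
def WitnessesIncons {V : Type*} (P N : V → V → Prop) (C : CycleData V) (k : V) : Prop :=
  ∃ (t u : V) (is js : List V),
    PosPath P k is t ∧ PosNegPath P N k js u ∧
    InCycle C t ∧ InCycle C u ∧ t ≠ u ∧
    ¬ PosArcOf C k t ∧ ¬ NegArcOf C k u ∧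
    ∀ j ∈ js, ∃! p : V × Bool, cond p.2 (P p.1 j) (N p.1 j)

/-- The cycle `C` is inconsistent in the signed graph `(P, N)`. -/
def Inconsistent {V : Type*} (P N : V → V → Prop) (C : CycleData V) : Prop :=
  ∃ k, WitnessesIncons P N C k

/-- The cycle `C` is consistent in the signed graph `(P, N)`. -/
def Consistent {V : Type*} (P N : V → V → Prop) (C : CycleData V) : Prop :=
  ¬ Inconsistent P N C

/-- `J` dominates the signed directed graph `(P, N)`. -/
def Dominates {V : Type*} (J : Set V) (P N : V → V → Prop) : Prop :=
  (∀ C : CycleData V, IsCycleIn C P N → IsEven C → Consistent P N C →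
    ∃ v ∈ J, InCycle C v) ∧
  (∀ C : CycleData V, IsCycleIn C P N → IsEven C → IsStrong C P N → Inconsistent P N C →
    (∃ v ∈ J, InCycle C v) ∨ ∃ k ∈ J, WitnessesIncons P N C k)

open Classical in
/-- The one-step percolation of a Boolean network: substitute the values of all
constant update functions into every update function. -/
noncomputable def percolate {V : Type*} (f : V → (V → Bool) → Bool) :
    V → (V → Bool) → Bool :=
  fun v x => f v (fun u => if h : ∃ b : Bool, ∀ y, f u y = b then h.choose else x u)

section AuxProof

open Classical

/-- Parity lemma: around a cyclic sequence, the number of sign changes is even. -/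
lemma aux_parity (m : ℕ) (hm : 0 < m) (b : ℕ → Bool) :
    Even (((Finset.range m).filter (fun i => ¬ (b i = b ((i + 1) % m)))).card) := by
  have key : ((((Finset.range m).filter
      (fun i => ¬ (b i = b ((i + 1) % m)))).card : ℕ) : ZMod 2) = 0 := by
    have h1 : ((((Finset.range m).filter
        (fun i => ¬ (b i = b ((i + 1) % m)))).card : ℕ) : ZMod 2)
        = ∑ i ∈ Finset.range m,
            (if b i = b ((i + 1) % m) then 0 else 1 : ZMod 2) := by
      rw [Finset.card_filter]
      push_cast
      apply Finset.sum_congr rfl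
      intro i _
      by_cases h : b i = b ((i + 1) % m) <;> simp [h]
    have h2 : ∀ i, (if b i = b ((i + 1) % m) then 0 else 1 : ZMod 2)
        = (if b i then 1 else 0) + (if b ((i + 1) % m) then 1 else 0) := by
      intro i
      cases hbi : b i <;> cases hbj : b ((i + 1) % m) <;> simp [hbi, hbj] <;> decide
    have h3 : ∑ i ∈ Finset.range m, (if b ((i + 1) % m) then 1 else 0 : ZMod 2)
        = ∑ i ∈ Finset.range m, (if b i then 1 else 0 : ZMod 2) := by
      apply Finset.sum_nbij' (fun i => (i + 1) % m) (fun j => (j + (m - 1)) % m)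
      · intro a ha
        simp only [Finset.mem_range] at *
        exact Nat.mod_lt _ hm
      · intro a ha
        simp only [Finset.mem_range] at *
        exact Nat.mod_lt _ hm
      · intro a ha
        simp only [Finset.mem_range] at ha
        have : ((a + 1) % m + (m - 1)) % m = ((a + 1) + (m - 1)) % m := by
          rw [Nat.mod_add_mod]
        rw [this]
        have : (a + 1) + (m - 1) = a + m := by omega
        rw [this]
        simp [Nat.add_mod_right, Nat.mod_eq_of_lt ha]
      · intro a ha
        simp only [Finset.mem_range] at ha
        have e1 : ((a + (m - 1)) % m + 1) % m = ((a + (m - 1)) + 1) % m :=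
          Nat.mod_add_mod _ _ _
        rw [e1]
        have e2 : (a + (m - 1)) + 1 = a + m := by omega
        rw [e2]
        simp [Nat.add_mod_right, Nat.mod_eq_of_lt ha]
      · intro a ha
        rfl
    rw [h1]
    simp_rw [h2]
    rw [Finset.sum_add_distrib, h3]
    exact CharTwo.add_self_eq_zero _
  have h2 : (2 : ℕ) ∣ _ := (ZMod.natCast_eq_zero_iff _ 2).mp key
  exact even_iff_two_dvd.mpr h2

variable {V : Type*} [Fintype V] [DecidableEq V]

/-- Core lemma: if `x` and `y` agree off `S`, are flipped on `S`, and both are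
stable on `S`, then some local influence graph has an even cycle. -/
lemma aux_core (f : V → (V → Bool) → Bool) :
    ∀ (n : ℕ) (S : Finset V) (x y : V → Bool), S.card ≤ n → S.Nonempty →
      (∀ v, v ∉ S → y v = x v) → (∀ v ∈ S, y v = !(x v)) →
      (∀ v ∈ S, f v x = x v) → (∀ v ∈ S, f v y = y v) →
      ∃ (z : V → Bool) (C : CycleData V), IsCycleIn C (localPos f z) (localNeg f z) ∧ IsEven C := by
  intro n
  induction n with
  | zero =>
    intro S x y hcard hne _ _ _ _
    exact absurd (Finset.card_eq_zero.mp (Nat.le_zero.mp hcard)) (by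
      simpa [Finset.eq_empty_iff_forall_notMem] using
        (Finset.nonempty_iff_ne_empty.mp hne))
  | succ n ih =>
    intro S x y hcard hne hoff hflip hx hy
    by_cases hall : ∀ u ∈ S, ∃ w ∈ S, f w (Function.update y u (x u)) = x w
    · -- a cycle at state y
      obtain ⟨u₀, hu₀⟩ := hne
      have hall' : ∀ u : V, ∃ w : V,
          u ∈ S → (w ∈ S ∧ f w (Function.update y u (x u)) = x w) := by
        intro u
        by_cases hu : u ∈ S
        · obtain ⟨w, hw, hfw⟩ := hall u hu
          exact ⟨w, fun _ => ⟨hw, hfw⟩⟩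
        · exact ⟨u₀, fun h => absurd h hu⟩
      choose g hg using hall'
      set s : ℕ → V := fun k => g^[k] u₀ with hs
      have hstep : ∀ k, s (k + 1) = g (s k) := by
        intro k
        simp [hs, Function.iterate_succ_apply']
      have hsS : ∀ k, s k ∈ S := by
        intro k
        induction k with
        | zero => simpa [hs] using hu₀
        | succ k ihk =>
          rw [hstep]
          exact (hg _ ihk).1
      have hrep : ∃ j, ∃ i, i < j ∧ s i = s j := by
        obtain ⟨i, j, hne', heq⟩ := Finite.exists_ne_map_eq_of_infinite s
        rcases Nat.lt_or_ge i j with h | h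
        · exact ⟨j, i, h, heq⟩
        · exact ⟨i, j, by omega, heq.symm⟩
      classical
      let j₀ := Nat.find hrep
      obtain ⟨i₀, hij, hseq⟩ : ∃ i, i < j₀ ∧ s i = s j₀ := Nat.find_spec hrep
      have hmin : ∀ j' < j₀, ¬ ∃ i, i < j' ∧ s i = s j' := fun j' hj' =>
        Nat.find_min hrep hj'
      set m := j₀ - i₀ with hm
      have hmpos : 0 < m := by omega
      set vtx : ℕ → V := fun k => s (i₀ + k % m) with hv
      set sg : ℕ → Bool := fun k => (y (vtx k) == y (vtx ((k + 1) % m))) with hsg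
      have hinj : ∀ i, i < m → ∀ j, j < m → vtx i = vtx j → i = j := by
        intro i hi j hj hveq
        by_contra hne2
        simp only [hv, Nat.mod_eq_of_lt hi, Nat.mod_eq_of_lt hj] at hveq
        rcases Nat.lt_or_ge i j with h | h
        · exact hmin (i₀ + j) (by omega) ⟨i₀ + i, by omega, hveq⟩
        · have h' : j < i := by omega
          exact hmin (i₀ + i) (by omega) ⟨i₀ + j, by omega, hveq.symm⟩
      have hsucc : ∀ k, k < m → vtx ((k + 1) % m) = g (vtx k) := by
        intro k hk
        have hvk : vtx k = s (i₀ + k) := by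
          simp [hv, Nat.mod_eq_of_lt hk]
        rcases Nat.lt_or_ge (k + 1) m with h | h
        · have h1 : vtx ((k + 1) % m) = s (i₀ + (k + 1)) := by
            simp [hv, Nat.mod_eq_of_lt h]
          have h2 : i₀ + (k + 1) = (i₀ + k) + 1 := by omega
          rw [h1, h2, hstep, hvk]
        · have hk1 : k + 1 = m := by omega
          have h0 : (k + 1) % m = 0 := by rw [hk1, Nat.mod_self]
          have h1 : vtx ((k + 1) % m) = s i₀ := by
            simp [h0, hv, Nat.zero_mod]
          have h2 : j₀ = (i₀ + k) + 1 := by omega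
          rw [h1, hseq, h2, hstep, hvk]
      have hvS : ∀ k, vtx k ∈ S := fun k => hsS _
      refine ⟨y, ⟨m, hmpos, vtx, sg, hinj⟩, ?_, ?_⟩
      · intro i him
        have harc : f (vtx ((i + 1) % m)) (Function.update y (vtx i) (x (vtx i)))
            = x (vtx ((i + 1) % m)) := by
          rw [hsucc i him]
          exact (hg (vtx i) (hvS i)).2
        have hfy : f (vtx ((i + 1) % m)) y = y (vtx ((i + 1) % m)) :=
          hy _ (hvS _)
        have hyu : y (vtx i) = !(x (vtx i)) := hflip _ (hvS i)
        have hyw : y (vtx ((i + 1) % m)) = !(x (vtx ((i + 1) % m))) := hflip _ (hvS _)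
        have hupd : Function.update y (vtx i) (y (vtx i)) = y :=
          Function.update_eq_self _ _
        show (if sg i then localPos f y (vtx i) (vtx ((i + 1) % m))
              else localNeg f y (vtx i) (vtx ((i + 1) % m)))
        have hsgi : sg i = (y (vtx i) == y (vtx ((i + 1) % m))) := rfl
        cases hxu : x (vtx i) <;> cases hxw : x (vtx ((i + 1) % m))
        · -- x a = false, x b = false : y a = true, y b = true, positive
          rw [hxu] at harc hyu; rw [hxw] at harc hyw
          simp only [Bool.not_false] at hyu hyw
          rw [hsgi, hyu, hyw]
          simp only [show (true == true) = true from rfl, if_true]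
          refine ⟨harc, ?_⟩
          rw [hyu] at hupd
          rw [hupd, hfy, hyw]
        · -- x a = false, x b = true : y a = true, y b = false, negative
          rw [hxu] at harc hyu; rw [hxw] at harc hyw
          simp only [Bool.not_false, Bool.not_true] at hyu hyw
          rw [hsgi, hyu, hyw]
          simp only [show (true == false) = false from rfl, if_false]
          refine ⟨harc, ?_⟩
          rw [hyu] at hupd
          rw [hupd, hfy, hyw]
        · -- x a = true, x b = false : y a = false, y b = true, negative
          rw [hxu] at harc hyu; rw [hxw] at harc hyw
          simp only [Bool.not_false, Bool.not_true] at hyu hyw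
          rw [hsgi, hyu, hyw]
          simp only [show (false == true) = false from rfl, if_false]
          refine ⟨?_, harc⟩
          rw [hyu] at hupd
          rw [hupd, hfy, hyw]
        · -- x a = true, x b = true : y a = false, y b = false, positive
          rw [hxu] at harc hyu; rw [hxw] at harc hyw
          simp only [Bool.not_true] at hyu hyw
          rw [hsgi, hyu, hyw]
          simp only [show (false == false) = true from rfl, if_true]
          refine ⟨?_, harc⟩
          rw [hyu] at hupd
          rw [hupd, hfy, hyw]
      · show IsEven _
        unfold IsEven
        have hcongr : (Finset.range m).filter (fun i => sg i = false)
            = (Finset.range m).filter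
                (fun i => ¬ ((fun k => y (vtx k)) i
                  = (fun k => y (vtx k)) ((i + 1) % m))) := by
          apply Finset.filter_congr
          intro i _
          simp [hsg]
        rw [show (⟨m, hmpos, vtx, sg, hinj⟩ : CycleData V).n = m from rfl,
          show (⟨m, hmpos, vtx, sg, hinj⟩ : CycleData V).sgn = sg from rfl, hcongr]
        exact aux_parity m hmpos _
    · push_neg at hall
      obtain ⟨u, huS, hu⟩ := hall
      have hustep : ∀ w ∈ S, f w (Function.update y u (x u)) = y w := by
        intro w hw
        have h1 := hu w hw
        have h2 := hflip w hw
        cases hval : f w (Function.update y u (x u)) <;>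
          cases hxw : x w <;> simp_all
      by_cases hS' : (S.erase u).Nonempty
      · refine ih (S.erase u) x (Function.update y u (x u)) ?_ hS' ?_ ?_ ?_ ?_
        · have := Finset.card_erase_of_mem huS
          have hpos := Finset.card_pos.mpr ⟨u, huS⟩
          omega
        · intro v hv
          by_cases hvu : v = u
          · subst hvu; simp
          · rw [Function.update_of_ne hvu]
            exact hoff v (fun hvS => hv (Finset.mem_erase.mpr ⟨hvu, hvS⟩))
        · intro v hv
          obtain ⟨hvu, hvS⟩ := Finset.mem_erase.mp hv
          rw [Function.update_of_ne hvu]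
          exact hflip v hvS
        · intro v hv
          exact hx v (Finset.mem_of_mem_erase hv)
        · intro v hv
          obtain ⟨hvu, hvS⟩ := Finset.mem_erase.mp hv
          rw [Function.update_of_ne hvu]
          exact hustep v hvS
      · -- S = {u} : positive loop at x
        have hSu : S = {u} := by
          apply Finset.eq_singleton_iff_unique_mem.mpr
          refine ⟨huS, fun v hv => ?_⟩
          by_contra hvu
          exact hS' ⟨v, Finset.mem_erase.mpr ⟨hvu, hv⟩⟩
        have hyx : y = Function.update x u (!(x u)) := by
          funext v
          by_cases hvu : v = u
          · rw [hvu, Function.update_self]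
            exact hflip u huS
          · rw [Function.update_of_ne hvu]
            exact hoff v (by simp [hSu, hvu])
        have hfx : f u x = x u := hx u huS
        have hfy : f u y = y u := hy u huS
        have hyu : y u = !(x u) := hflip u huS
        refine ⟨x, ⟨1, one_pos, fun _ => u, fun _ => true, fun i hi j hj _ => by omega⟩,
          ?_, ?_⟩
        · intro i hi
          interval_cases i
          show (if true then localPos f x u u else localNeg f x u u)
          simp only [if_true, localPos]
          have hux : Function.update x u (x u) = x := Function.update_eq_self _ _
          cases hxu : x u
          · constructor
            · rw [hxu] at hux; rw [hux, hfx, hxu]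
            · have : Function.update x u true = y := by rw [hyx, hxu]; rfl
              rw [this, hfy, hyu, hxu]
              try rfl
          · constructor
            · have : Function.update x u false = y := by rw [hyx, hxu]; rfl
              rw [this, hfy, hyu, hxu]
              try rfl
            · rw [hxu] at hux; rw [hux, hfx, hxu]
        · show IsEven _
          unfold IsEven
          exact ⟨0, rfl⟩

end AuxProof

theorem stmt_14 {V : Type*} [Fintype V] [DecidableEq V]
    (f : V → (V → Bool) → Bool)
    (hloc : ∀ x : V → Bool, ¬ ∃ C : CycleData V,
      IsCycleIn C (localPos f x) (localNeg f x) ∧ IsEven C) :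
    ∃! A : Set (V → Bool), Attractor (astg f) A := by
  classical
  have bool_flip : ∀ {a b : Bool}, a ≠ b → b = !a := by
    intro a b h; cases a <;> cases b <;> simp_all
  -- any two trap sets intersect
  have hmeet : ∀ A B : Set (V → Bool), TrapSet (astg f) A → TrapSet (astg f) B →
      (A ∩ B).Nonempty := by
    intro A B hA hB
    by_contra hdisj
    rw [Set.not_nonempty_iff_eq_empty] at hdisj
    obtain ⟨a0, ha0⟩ := hA.1
    obtain ⟨b0, hb0⟩ := hB.1
    obtain ⟨p, hp, hmin⟩ := Set.exists_min_image
      {p : (V → Bool) × (V → Bool) | p.1 ∈ A ∧ p.2 ∈ B}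
      (fun p => (Finset.univ.filter (fun v => p.1 v ≠ p.2 v)).card)
      (Set.toFinite _) ⟨(a0, b0), ha0, hb0⟩
    obtain ⟨hpa, hpb⟩ := hp
    set x := p.1 with hxdef
    set y := p.2 with hydef
    set Δ := Finset.univ.filter (fun v => x v ≠ y v) with hΔ
    have hΔne : Δ.Nonempty := by
      rcases Finset.eq_empty_or_nonempty Δ with h | h
      · exfalso
        have hxy : x = y := by
          funext v
          by_contra hv
          have hvΔ : v ∈ Δ := by simp [hΔ, hv]
          rw [h] at hvΔ
          exact absurd hvΔ (Finset.notMem_empty v)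
        have : x ∈ A ∩ B := ⟨hpa, hxy ▸ hpb⟩
        rw [hdisj] at this
        exact this
      · exact h
    have hstabx : ∀ u ∈ Δ, f u x = x u := by
      intro u huΔ
      by_contra hfu
      have hxy : x u ≠ y u := by simpa [hΔ] using huΔ
      have hstep : astg f x (Function.update x u (f u x)) :=
        ⟨u, Function.update_self u _ x, by
          rw [Function.update_self]; exact hfu,
          fun w hw => Function.update_of_ne hw _ x⟩
      have hx'A : Function.update x u (f u x) ∈ A := hA.2 x hpa _ hstep
      have hfilter : Finset.univ.filter
          (fun v => Function.update x u (f u x) v ≠ y v) = Δ.erase u := by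
        ext v
        simp only [Finset.mem_filter, Finset.mem_univ, true_and, Finset.mem_erase, hΔ]
        by_cases hvu : v = u
        · subst hvu
          rw [Function.update_self]
          have h1 : f v x = !(x v) := bool_flip (Ne.symm hfu)
          have h2 : y v = !(x v) := bool_flip hxy
          simp [h1, h2]
        · rw [Function.update_of_ne hvu]
          simp [hvu]
      have := hmin (Function.update x u (f u x), y) ⟨hx'A, hpb⟩
      simp only [hfilter] at this
      have hcard := Finset.card_erase_of_mem huΔ
      have hpos := Finset.card_pos.mpr ⟨u, huΔ⟩
      omega
    have hstaby : ∀ u ∈ Δ, f u y = y u := by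
      intro u huΔ
      by_contra hfu
      have hxy : x u ≠ y u := by simpa [hΔ] using huΔ
      have hstep : astg f y (Function.update y u (f u y)) :=
        ⟨u, Function.update_self u _ y, by
          rw [Function.update_self]; exact hfu,
          fun w hw => Function.update_of_ne hw _ y⟩
      have hy'B : Function.update y u (f u y) ∈ B := hB.2 y hpb _ hstep
      have hfilter : Finset.univ.filter
          (fun v => x v ≠ Function.update y u (f u y) v) = Δ.erase u := by
        ext v
        simp only [Finset.mem_filter, Finset.mem_univ, true_and, Finset.mem_erase, hΔ]
        by_cases hvu : v = u
        · subst hvu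
          rw [Function.update_self]
          have h1 : f v y = !(y v) := bool_flip (Ne.symm hfu)
          have h2 : x v = !(y v) := bool_flip (Ne.symm hxy)
          simp [h1, h2]
        · rw [Function.update_of_ne hvu]
          simp [hvu]
      have := hmin (x, Function.update y u (f u y)) ⟨hpa, hy'B⟩
      simp only [hfilter] at this
      have hcard := Finset.card_erase_of_mem huΔ
      have hpos := Finset.card_pos.mpr ⟨u, huΔ⟩
      omega
    obtain ⟨z, C, hC, hCe⟩ := aux_core f Δ.card Δ x y le_rfl hΔne
      (fun v hv => by
        have : ¬ (x v ≠ y v) := by simpa [hΔ] using hv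
        exact (not_not.mp this).symm)
      (fun v hv => bool_flip (by simpa [hΔ] using hv))
      hstabx hstaby
    exact hloc z ⟨C, hC, hCe⟩
  -- existence of an attractor: a trap set of minimal cardinality
  obtain ⟨A₀, hA₀, hminA⟩ := Set.exists_min_image
    {A : Set (V → Bool) | TrapSet (astg f) A} Set.ncard (Set.toFinite _)
    ⟨Set.univ, ⟨⟨fun _ => false, trivial⟩, fun _ _ _ _ => trivial⟩⟩
  have hattr : Attractor (astg f) A₀ :=
    ⟨hA₀, fun B hBA hB => Set.eq_of_subset_of_ncard_le hBA (hminA B hB) (Set.toFinite A₀)⟩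
  refine ⟨A₀, hattr, ?_⟩
  intro A' hA'
  have hint := hmeet A' A₀ hA'.1 hattr.1
  have htrap : TrapSet (astg f) (A' ∩ A₀) :=
    ⟨hint, fun u hu w huw => ⟨hA'.1.2 u hu.1 w huw, hattr.1.2 u hu.2 w huw⟩⟩
  have h1 : A' ∩ A₀ = A' := hA'.2 _ Set.inter_subset_left htrap
  have h2 : A' ∩ A₀ = A₀ := hattr.2 _ Set.inter_subset_right htrap
  rw [← h1, h2]
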